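/- Let K be an algebraic Kähler curvature operator on ℝ^{2m} and R the algebraic curvature operator on ℝ^{2m+1} defined by R_{ijkl} = K_{ijkl} - (τ²/4)(2J_{ij}J_{kl} + J_{ik}J_{jl} - J_{il}J_{jk}), R_{ijk0} = 0, R_{i0j0} = (τ²/4)δ_{ij} (indices 1..2m horizontal, index 0 vertical). Then ‖R‖² = ‖K‖² - (3/2)mτ²λ̄ + ((6m²+5m)/16)τ⁴, where λ̄ = scal(K)/(2m). -/
import Mathlib


open scoped BigOperators

namespace PaperStmt

noncomputable section Work

variable {N : Type*} [Fintype N] [DecidableEq N]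

/-- Kronecker delta. -/
def kd (i j : N) : ℝ := if i = j then 1 else 0

/-- Algebraic curvature operator: antisymmetry in first and last pairs,
pair-interchange symmetry, and the first Bianchi identity. -/
def IsCurvOp (R : N → N → N → N → ℝ) : Prop :=
  (∀ i j k l, R j i k l = - R i j k l) ∧
  (∀ i j k l, R i j l k = - R i j k l) ∧
  (∀ i j k l, R k l i j = R i j k l) ∧
  (∀ i j k l, R i j k l + R j k i l + R k i j l = 0)

/-- Ricci tensor. -/
def ric (R : N → N → N → N → ℝ) (i j : N) : ℝ := ∑ k, R i k j k

/-- Scalar curvature. -/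
def scal (R : N → N → N → N → ℝ) : ℝ := ∑ i, ric R i i

/-- Inner product of symmetric 2-tensors. -/
def inner2 (A B : N → N → ℝ) : ℝ := ∑ i, ∑ j, A i j * B i j

def norm2sq (A : N → N → ℝ) : ℝ := inner2 A A

/-- Inner product of curvature operators: (1/4) Σ X_{ijkl} Y_{ijkl}. -/
def inner4 (X Y : N → N → N → N → ℝ) : ℝ :=
  (1/4) * ∑ i, ∑ j, ∑ k, ∑ l, X i j k l * Y i j k l

def norm4sq (X : N → N → N → N → ℝ) : ℝ := inner4 X X

/-- Wedge (Kulkarni–Nomizu type) product of symmetric endomorphisms. -/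
def wedge (A B : N → N → ℝ) (i j k l : N) : ℝ :=
  (1/2) * (A i k * B j l + B i k * A j l - A i l * B j k - A j k * B i l)

/-- Normalized scalar curvature λ̄ = scal/n. -/
def lam (n : ℕ) (R : N → N → N → N → ℝ) : ℝ := scal R / n

/-- Traceless Ricci tensor. -/
def ric0 (n : ℕ) (R : N → N → N → N → ℝ) (i j : N) : ℝ :=
  ric R i j - lam n R * kd i j

/-- Scalar-curvature part R_I = (λ̄/(n-1)) id∧id. -/
def RI (n : ℕ) (R : N → N → N → N → ℝ) (i j k l : N) : ℝ :=
  (lam n R / ((n : ℝ) - 1)) * wedge kd kd i j k l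

/-- Traceless-Ricci part R_{Ric₀} = (2/(n-2)) Ric₀ ∧ id. -/
def RRic0 (n : ℕ) (R : N → N → N → N → ℝ) (i j k l : N) : ℝ :=
  (2 / ((n : ℝ) - 2)) * wedge (ric0 n R) kd i j k l

/-- Weyl part W = R - R_I - R_{Ric₀}. -/
def weyl (n : ℕ) (R : N → N → N → N → ℝ) (i j k l : N) : ℝ :=
  R i j k l - RI n R i j k l - RRic0 n R i j k l

/-- Square of a curvature operator. -/
def csq (R : N → N → N → N → ℝ) (i j k l : N) : ℝ :=
  (1/2) * ∑ p, ∑ q, R i j p q * R k l p q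

/-- Hamilton's sharp operation R♯. -/
def sharp (R : N → N → N → N → ℝ) (i j k l : N) : ℝ :=
  ∑ p, ∑ q, (R i p k q * R j p l q - R i p l q * R j p k q)

/-- Hamilton's quadratic term Q(R) = R² + R♯. -/
def Q (R : N → N → N → N → ℝ) (i j k l : N) : ℝ := csq R i j k l + sharp R i j k l

/-- Square of a symmetric 2-tensor. -/
def matsq (A : N → N → ℝ) (i j : N) : ℝ := ∑ k, A i k * A k j

/-- Traceless part of a symmetric 2-tensor. -/
def tless (n : ℕ) (A : N → N → ℝ) (i j : N) : ℝ :=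
  A i j - ((∑ k, A k k) / n) * kd i j

/-- Kähler structure hypotheses: `K` is an algebraic curvature operator on ℝ^{2m},
`J` is an orthogonal almost-complex structure, and `K` is invariant under `J`. -/
def IsKael (m : ℕ) (K : Fin (2*m) → Fin (2*m) → Fin (2*m) → Fin (2*m) → ℝ)
    (J : Fin (2*m) → Fin (2*m) → ℝ) : Prop :=
  IsCurvOp K ∧ (∀ i j, J j i = - J i j) ∧ (∀ i j, (∑ k, J i k * J j k) = kd i j) ∧
  (∀ i j k l, K i j k l = ∑ p, ∑ q, J p i * J q j * K p q k l)

/-- The circle-bundle curvature operator on ℝ^{2m+1} associated to a Kähler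
curvature operator `K`: horizontal indices are `Sum.inl i` (for `i : Fin (2m)`),
the vertical index is `Sum.inr ()`. -/
def Rb (m : ℕ) (K : Fin (2*m) → Fin (2*m) → Fin (2*m) → Fin (2*m) → ℝ)
    (J : Fin (2*m) → Fin (2*m) → ℝ) (τ : ℝ) :
    (Fin (2*m) ⊕ Unit) → (Fin (2*m) ⊕ Unit) → (Fin (2*m) ⊕ Unit) → (Fin (2*m) ⊕ Unit) → ℝ
  | Sum.inl i, Sum.inl j, Sum.inl k, Sum.inl l =>
      K i j k l - (τ^2/4) * (2 * J i j * J k l + J i k * J j l - J i l * J j k)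
  | Sum.inl i, Sum.inr _, Sum.inl k, Sum.inr _ => (τ^2/4) * kd i k
  | Sum.inl i, Sum.inr _, Sum.inr _, Sum.inl l => -((τ^2/4) * kd i l)
  | Sum.inr _, Sum.inl j, Sum.inl k, Sum.inr _ => -((τ^2/4) * kd j k)
  | Sum.inr _, Sum.inl j, Sum.inr _, Sum.inl l => (τ^2/4) * kd j l
  | _, _, _, _ => 0

/-- λ̄ = scal(K)/(2m) for a Kähler curvature operator on ℝ^{2m}. -/
def lamK (m : ℕ) (K : Fin (2*m) → Fin (2*m) → Fin (2*m) → Fin (2*m) → ℝ) : ℝ :=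
  scal K / (2 * (m : ℝ))

/-- ‖K_E‖² = (2m/(m+1)) λ̄². -/
def nKE (m : ℕ) (K : Fin (2*m) → Fin (2*m) → Fin (2*m) → Fin (2*m) → ℝ) : ℝ :=
  (2 * (m : ℝ) / ((m : ℝ) + 1)) * (lamK m K) ^ 2

/-- ‖K_{Ric₀}‖² = (4/(m+2)) |Ric(K)₀|_K² = (2/(m+2)) |Ric(K)₀|². -/
def nKRic0 (m : ℕ) (K : Fin (2*m) → Fin (2*m) → Fin (2*m) → Fin (2*m) → ℝ) : ℝ :=
  (2 / ((m : ℝ) + 2)) * norm2sq (ric0 (2*m) K)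

/-- ‖B‖², the squared norm of the Bochner–Weyl part of `K`, via orthogonality
of the U(m)-decomposition. -/
def nB (m : ℕ) (K : Fin (2*m) → Fin (2*m) → Fin (2*m) → Fin (2*m) → ℝ) : ℝ :=
  norm4sq K - nKE m K - nKRic0 m K


section NormHelpers

lemma kd_symm (a b : N) : kd a b = kd b a := by simp [kd, eq_comm]

lemma sum_kd_mul (a : N) (f : N → ℝ) : (∑ p, kd a p * f p) = f a := by
  simp [kd, ite_mul, Finset.sum_ite_eq]

lemma sum_mul_kd (a : N) (f : N → ℝ) : (∑ p, f p * kd p a) = f a := by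
  simp [kd, mul_ite, Finset.sum_ite_eq']

lemma sum_mul_kd' (a : N) (f : N → ℝ) : (∑ p, f p * kd a p) = f a := by
  simp [kd, mul_ite, Finset.sum_ite_eq]

lemma sum_kd_sq : (∑ i : N, ∑ k, kd i k * kd i k) = (Fintype.card N : ℝ) := by
  simp [kd, Finset.sum_ite_eq]

lemma sum3_rotate (f : N → N → N → ℝ) :
    (∑ i, ∑ j, ∑ k, f i j k) = ∑ j, ∑ k, ∑ i, f i j k := by
  rw [Finset.sum_comm]; exact Finset.sum_congr rfl fun j _ => Finset.sum_comm

variable {K : N → N → N → N → ℝ} {J : N → N → ℝ}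

lemma sumJsq (hJ : ∀ i j, (∑ k, J i k * J j k) = kd i j) :
    (∑ i : N, ∑ j, J i j * J i j) = (Fintype.card N : ℝ) := by
  have h : ∀ i : N, (∑ j, J i j * J i j) = 1 := fun i => by simpa [kd] using hJ i i
  simp [h]

lemma ric_contr (ha : ∀ i j k l, K j i k l = - K i j k l)
    (hb : ∀ i j k l, K i j l k = - K i j k l) (a q : N) :
    (∑ i, K i a i q) = ric K a q := by
  unfold ric
  refine Finset.sum_congr rfl fun i _ => ?_
  calc K i a i q = -K a i i q := ha a i i q
    _ = -(-K a i q i) := by rw [hb a i q i]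
    _ = K a i q i := neg_neg _

lemma contract13 (ha : ∀ i j k l, K j i k l = - K i j k l)
    (hb : ∀ i j k l, K i j l k = - K i j k l)
    (hs : ∀ i j k l, K k l i j = K i j k l)
    (hJ : ∀ i j, (∑ k, J i k * J j k) = kd i j)
    (hinv : ∀ i j k l, K i j k l = ∑ p, ∑ q, J p i * J q j * K p q k l) (a b : N) :
    (∑ i, ∑ j, J i j * K i a j b) = ∑ s, ric K a s * J s b := by
  have hK2 : ∀ i j, K i a j b = ∑ p, ∑ q, J p j * J q b * K i a p q := by
    intro i j
    rw [← hs i a j b, hinv j b i a]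
    exact Finset.sum_congr rfl fun p _ => Finset.sum_congr rfl fun q _ => by rw [hs]
  calc (∑ i, ∑ j, J i j * K i a j b)
      = ∑ i, ∑ j, ∑ p, ∑ q, J i j * (J p j * J q b * K i a p q) := by
        refine Finset.sum_congr rfl fun i _ => Finset.sum_congr rfl fun j _ => ?_
        rw [hK2 i j, Finset.mul_sum]
        exact Finset.sum_congr rfl fun p _ => by rw [Finset.mul_sum]
    _ = ∑ i, ∑ p, ∑ q, ∑ j, J i j * (J p j * J q b * K i a p q) :=
        Finset.sum_congr rfl fun i _ => sum3_rotate _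
    _ = ∑ i, ∑ p, ∑ q, kd i p * (J q b * K i a p q) := by
        refine Finset.sum_congr rfl fun i _ => Finset.sum_congr rfl fun p _ =>
          Finset.sum_congr rfl fun q _ => ?_
        rw [← hJ i p, Finset.sum_mul]
        exact Finset.sum_congr rfl fun j _ => by ring
    _ = ∑ i, ∑ q, J q b * K i a i q := by
        refine Finset.sum_congr rfl fun i _ => ?_
        rw [Finset.sum_comm]
        exact Finset.sum_congr rfl fun q _ => sum_kd_mul i _
    _ = ∑ s, (∑ i, K i a i s) * J s b := by
        rw [Finset.sum_comm]
        refine Finset.sum_congr rfl fun s _ => ?_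
        rw [Finset.sum_mul]
        exact Finset.sum_congr rfl fun i _ => by ring
    _ = ∑ s, ric K a s * J s b := by
        refine Finset.sum_congr rfl fun s _ => ?_
        rw [ric_contr ha hb]

lemma bianchi_contr (ha : ∀ i j k l, K j i k l = - K i j k l)
    (hb : ∀ i j k l, K i j l k = - K i j k l)
    (hs : ∀ i j k l, K k l i j = K i j k l)
    (hbi : ∀ i j k l, K i j k l + K j k i l + K k i j l = 0)
    (hJa : ∀ i j, J j i = - J i j)
    (hJ : ∀ i j, (∑ k, J i k * J j k) = kd i j)
    (hinv : ∀ i j k l, K i j k l = ∑ p, ∑ q, J p i * J q j * K p q k l) (a b : N) :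
    (∑ i, ∑ j, J i j * K i j a b) = 2 * ∑ s, ric K a s * J s b := by
  have step : (∑ i, ∑ j, J i j * K i j a b)
      = (∑ i, ∑ j, -(J i j * K j a i b)) + ∑ i, ∑ j, J i j * K i a j b := by
    rw [← Finset.sum_add_distrib]
    refine Finset.sum_congr rfl fun i _ => ?_
    rw [← Finset.sum_add_distrib]
    refine Finset.sum_congr rfl fun j _ => ?_
    have h0 := hbi i j a b
    have h1 := ha i a j b
    have h2 : K i j a b = -K j a i b + K i a j b := by linarith
    rw [h2]; ring
  have swap1 : (∑ i, ∑ j, -(J i j * K j a i b)) = ∑ i, ∑ j, J i j * K i a j b := by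
    rw [Finset.sum_comm]
    refine Finset.sum_congr rfl fun i _ => Finset.sum_congr rfl fun j _ => ?_
    rw [hJa j i]; ring
  rw [step, swap1, contract13 ha hb hs hJ hinv]; ring

lemma A_eq (ha : ∀ i j k l, K j i k l = - K i j k l)
    (hb : ∀ i j k l, K i j l k = - K i j k l)
    (hs : ∀ i j k l, K k l i j = K i j k l)
    (hbi : ∀ i j k l, K i j k l + K j k i l + K k i j l = 0)
    (hJa : ∀ i j, J j i = - J i j)
    (hJ : ∀ i j, (∑ k, J i k * J j k) = kd i j)
    (hinv : ∀ i j k l, K i j k l = ∑ p, ∑ q, J p i * J q j * K p q k l) :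
    (∑ i, ∑ j, ∑ k, ∑ l, K i j k l * (J i j * J k l)) = 2 * scal K := by
  calc (∑ i, ∑ j, ∑ k, ∑ l, K i j k l * (J i j * J k l))
      = ∑ i, ∑ j, J i j * (∑ k, ∑ l, J k l * K k l i j) := by
        refine Finset.sum_congr rfl fun i _ => Finset.sum_congr rfl fun j _ => ?_
        rw [Finset.mul_sum]
        refine Finset.sum_congr rfl fun k _ => ?_
        rw [Finset.mul_sum]
        refine Finset.sum_congr rfl fun l _ => ?_
        rw [hs i j k l]; ring
    _ = ∑ i, ∑ j, J i j * (2 * ∑ s, ric K i s * J s j) := by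
        refine Finset.sum_congr rfl fun i _ => Finset.sum_congr rfl fun j _ => ?_
        rw [bianchi_contr ha hb hs hbi hJa hJ hinv i j]
    _ = ∑ i, ∑ s, (2 * ric K i s) * (∑ j, J s j * J i j) := by
        refine Finset.sum_congr rfl fun i _ => ?_
        calc (∑ j, J i j * (2 * ∑ s, ric K i s * J s j))
            = ∑ j, ∑ s, (2 * ric K i s) * (J s j * J i j) := by
              refine Finset.sum_congr rfl fun j _ => ?_
              rw [Finset.mul_sum, Finset.mul_sum]
              exact Finset.sum_congr rfl fun s _ => by ring
          _ = ∑ s, ∑ j, (2 * ric K i s) * (J s j * J i j) := Finset.sum_comm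
          _ = ∑ s, (2 * ric K i s) * (∑ j, J s j * J i j) :=
              Finset.sum_congr rfl fun s _ => (Finset.mul_sum _ _ _).symm
    _ = ∑ i, ∑ s, (2 * ric K i s) * kd s i := by
        refine Finset.sum_congr rfl fun i _ => Finset.sum_congr rfl fun s _ => ?_
        rw [hJ s i]
    _ = ∑ i, 2 * ric K i i := Finset.sum_congr rfl fun i _ => sum_mul_kd i _
    _ = 2 * scal K := (Finset.mul_sum _ _ _).symm

lemma contract34 (hs : ∀ i j k l, K k l i j = K i j k l)
    (hJ : ∀ i j, (∑ k, J i k * J j k) = kd i j)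
    (hinv : ∀ i j k l, K i j k l = ∑ p, ∑ q, J p i * J q j * K p q k l) (i j : N) :
    (∑ k, ∑ l, (J i k * J j l) * K i j k l) = K i j i j := by
  have hK3 : ∀ k l, K i j k l = ∑ p, ∑ q, J p k * J q l * K i j p q := by
    intro k l
    rw [hs k l i j, hinv k l i j]
    exact Finset.sum_congr rfl fun p _ => Finset.sum_congr rfl fun q _ => by rw [hs]
  calc (∑ k, ∑ l, (J i k * J j l) * K i j k l)
      = ∑ k, ∑ l, ∑ p, ∑ q, (J i k * J p k) * ((J j l * J q l) * K i j p q) := by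
        refine Finset.sum_congr rfl fun k _ => Finset.sum_congr rfl fun l _ => ?_
        rw [hK3 k l, Finset.mul_sum]
        refine Finset.sum_congr rfl fun p _ => ?_
        rw [Finset.mul_sum]
        exact Finset.sum_congr rfl fun q _ => by ring
    _ = ∑ k, ∑ p, ∑ q, ∑ l, (J i k * J p k) * ((J j l * J q l) * K i j p q) :=
        Finset.sum_congr rfl fun k _ => sum3_rotate _
    _ = ∑ k, ∑ p, ∑ q, ((J i k * J p k) * K i j p q) * kd j q := by
        refine Finset.sum_congr rfl fun k _ => Finset.sum_congr rfl fun p _ =>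
          Finset.sum_congr rfl fun q _ => ?_
        rw [← hJ j q, Finset.mul_sum]
        exact Finset.sum_congr rfl fun l _ => by ring
    _ = ∑ k, ∑ p, (J i k * J p k) * K i j p j :=
        Finset.sum_congr rfl fun k _ => Finset.sum_congr rfl fun p _ => sum_mul_kd' j _
    _ = ∑ p, (∑ k, J i k * J p k) * K i j p j := by
        rw [Finset.sum_comm]
        refine Finset.sum_congr rfl fun p _ => ?_
        rw [Finset.sum_mul]
    _ = ∑ p, kd i p * K i j p j := by
        refine Finset.sum_congr rfl fun p _ => ?_
        rw [hJ i p]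
    _ = K i j i j := sum_kd_mul i _

lemma B_eq (hs : ∀ i j k l, K k l i j = K i j k l)
    (hJ : ∀ i j, (∑ k, J i k * J j k) = kd i j)
    (hinv : ∀ i j k l, K i j k l = ∑ p, ∑ q, J p i * J q j * K p q k l) :
    (∑ i, ∑ j, ∑ k, ∑ l, K i j k l * (J i k * J j l)) = scal K := by
  calc (∑ i, ∑ j, ∑ k, ∑ l, K i j k l * (J i k * J j l))
      = ∑ i, ∑ j, (∑ k, ∑ l, (J i k * J j l) * K i j k l) :=
        Finset.sum_congr rfl fun i _ => Finset.sum_congr rfl fun j _ =>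
          Finset.sum_congr rfl fun k _ => Finset.sum_congr rfl fun l _ => by ring
    _ = ∑ i, ∑ j, K i j i j :=
        Finset.sum_congr rfl fun i _ => Finset.sum_congr rfl fun j _ =>
          contract34 hs hJ hinv i j
    _ = scal K := rfl

lemma C_eq (hb : ∀ i j k l, K i j l k = - K i j k l)
    (hs : ∀ i j k l, K k l i j = K i j k l)
    (hJ : ∀ i j, (∑ k, J i k * J j k) = kd i j)
    (hinv : ∀ i j k l, K i j k l = ∑ p, ∑ q, J p i * J q j * K p q k l) :
    (∑ i, ∑ j, ∑ k, ∑ l, K i j k l * (J i l * J j k)) = -scal K := by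
  calc (∑ i, ∑ j, ∑ k, ∑ l, K i j k l * (J i l * J j k))
      = ∑ i, ∑ j, ∑ k, ∑ l, -(K i j k l * (J i k * J j l)) := by
        refine Finset.sum_congr rfl fun i _ => Finset.sum_congr rfl fun j _ => ?_
        rw [Finset.sum_comm]
        refine Finset.sum_congr rfl fun k _ => Finset.sum_congr rfl fun l _ => ?_
        rw [hb i j k l]; ring
    _ = -(∑ i, ∑ j, ∑ k, ∑ l, K i j k l * (J i k * J j l)) := by simp
    _ = -scal K := by rw [B_eq hs hJ hinv]

lemma pair12_34 (f g : N → N → ℝ) :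
    (∑ i, ∑ j, ∑ k, ∑ l, f i j * g k l) = (∑ i, ∑ j, f i j) * (∑ k, ∑ l, g k l) := by
  calc (∑ i, ∑ j, ∑ k, ∑ l, f i j * g k l)
      = ∑ i, ∑ j, f i j * (∑ k, ∑ l, g k l) := by
        refine Finset.sum_congr rfl fun i _ => Finset.sum_congr rfl fun j _ => ?_
        simp only [Finset.mul_sum]
    _ = (∑ i, ∑ j, f i j) * (∑ k, ∑ l, g k l) := by
        simp only [Finset.sum_mul]

lemma pair13_24 (f g : N → N → ℝ) :
    (∑ i, ∑ j, ∑ k, ∑ l, f i k * g j l) = (∑ i, ∑ k, f i k) * (∑ j, ∑ l, g j l) := by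
  calc (∑ i, ∑ j, ∑ k, ∑ l, f i k * g j l)
      = ∑ i, ∑ k, ∑ j, ∑ l, f i k * g j l :=
        Finset.sum_congr rfl fun i _ => Finset.sum_comm
    _ = ∑ i, ∑ k, f i k * (∑ j, ∑ l, g j l) := by
        refine Finset.sum_congr rfl fun i _ => Finset.sum_congr rfl fun k _ => ?_
        simp only [Finset.mul_sum]
    _ = (∑ i, ∑ k, f i k) * (∑ j, ∑ l, g j l) := by
        simp only [Finset.sum_mul]

lemma pair14_23 (f g : N → N → ℝ) :
    (∑ i, ∑ j, ∑ k, ∑ l, f i l * g j k) = (∑ i, ∑ l, f i l) * (∑ j, ∑ k, g j k) := by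
  calc (∑ i, ∑ j, ∑ k, ∑ l, f i l * g j k)
      = ∑ i, ∑ l, ∑ j, ∑ k, f i l * g j k := by
        refine Finset.sum_congr rfl fun i _ => ?_
        rw [sum3_rotate (fun j k l => f i l * g j k), sum3_rotate (fun k l j => f i l * g j k)]
    _ = ∑ i, ∑ l, f i l * (∑ j, ∑ k, g j k) := by
        refine Finset.sum_congr rfl fun i _ => Finset.sum_congr rfl fun l _ => ?_
        simp only [Finset.mul_sum]
    _ = (∑ i, ∑ l, f i l) * (∑ j, ∑ k, g j k) := by
        simp only [Finset.sum_mul]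

lemma T7_eq (hJ : ∀ i j, (∑ k, J i k * J j k) = kd i j) :
    (∑ i, ∑ j, ∑ k, ∑ l, (J i j * J k l) * (J i k * J j l)) = (Fintype.card N : ℝ) := by
  calc (∑ i, ∑ j, ∑ k, ∑ l, (J i j * J k l) * (J i k * J j l))
      = ∑ i, ∑ j, ∑ k, (J i j * J i k) * kd k j := by
        refine Finset.sum_congr rfl fun i _ => Finset.sum_congr rfl fun j _ =>
          Finset.sum_congr rfl fun k _ => ?_
        rw [← hJ k j, Finset.mul_sum]
        exact Finset.sum_congr rfl fun l _ => by ring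
    _ = ∑ i, ∑ j, J i j * J i j :=
        Finset.sum_congr rfl fun i _ => Finset.sum_congr rfl fun j _ => sum_mul_kd j _
    _ = (Fintype.card N : ℝ) := sumJsq hJ

lemma T8_eq (hJa : ∀ i j, J j i = - J i j)
    (hJ : ∀ i j, (∑ k, J i k * J j k) = kd i j) :
    (∑ i, ∑ j, ∑ k, ∑ l, (J i j * J k l) * (J i l * J j k)) = -(Fintype.card N : ℝ) := by
  calc (∑ i, ∑ j, ∑ k, ∑ l, (J i j * J k l) * (J i l * J j k))
      = ∑ i, ∑ j, ∑ k, (J i j * J j k) * kd k i := by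
        refine Finset.sum_congr rfl fun i _ => Finset.sum_congr rfl fun j _ =>
          Finset.sum_congr rfl fun k _ => ?_
        rw [← hJ k i, Finset.mul_sum]
        exact Finset.sum_congr rfl fun l _ => by ring
    _ = ∑ i, ∑ j, -(J i j * J i j) := by
        refine Finset.sum_congr rfl fun i _ => Finset.sum_congr rfl fun j _ => ?_
        rw [sum_mul_kd i _, hJa i j]; ring
    _ = -(∑ i : N, ∑ j, J i j * J i j) := by simp
    _ = -(Fintype.card N : ℝ) := by rw [sumJsq hJ]

lemma T9_eq (hJ : ∀ i j, (∑ k, J i k * J j k) = kd i j) :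
    (∑ i, ∑ j, ∑ k, ∑ l, (J i k * J j l) * (J i l * J j k)) = (Fintype.card N : ℝ) := by
  calc (∑ i, ∑ j, ∑ k, ∑ l, (J i k * J j l) * (J i l * J j k))
      = ∑ i, ∑ j, ∑ k, (J i k * J j k) * kd j i := by
        refine Finset.sum_congr rfl fun i _ => Finset.sum_congr rfl fun j _ =>
          Finset.sum_congr rfl fun k _ => ?_
        rw [← hJ j i, Finset.mul_sum]
        exact Finset.sum_congr rfl fun l _ => by ring
    _ = ∑ i, ∑ j, kd i j * kd j i := by
        refine Finset.sum_congr rfl fun i _ => Finset.sum_congr rfl fun j _ => ?_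
        rw [← Finset.sum_mul, hJ i j]
    _ = (Fintype.card N : ℝ) := by
        calc (∑ i : N, ∑ j, kd i j * kd j i) = ∑ i : N, ∑ j, kd i j * kd i j :=
              Finset.sum_congr rfl fun i _ => Finset.sum_congr rfl fun j _ => by
                rw [kd_symm j i]
          _ = (Fintype.card N : ℝ) := sum_kd_sq


lemma T4_eq (hJ : ∀ i j, (∑ k, J i k * J j k) = kd i j) :
    (∑ i, ∑ j, ∑ k, ∑ l, (J i j * J i j) * (J k l * J k l)) = (Fintype.card N : ℝ)^2 := by
  rw [pair12_34 (fun a b => J a b * J a b) (fun a b => J a b * J a b), sumJsq hJ]; ring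

lemma T5_eq (hJ : ∀ i j, (∑ k, J i k * J j k) = kd i j) :
    (∑ i, ∑ j, ∑ k, ∑ l, (J i k * J i k) * (J j l * J j l)) = (Fintype.card N : ℝ)^2 := by
  rw [pair13_24 (fun a b => J a b * J a b) (fun a b => J a b * J a b), sumJsq hJ]; ring

lemma T6_eq (hJ : ∀ i j, (∑ k, J i k * J j k) = kd i j) :
    (∑ i, ∑ j, ∑ k, ∑ l, (J i l * J i l) * (J j k * J j k)) = (Fintype.card N : ℝ)^2 := by
  rw [pair14_23 (fun a b => J a b * J a b) (fun a b => J a b * J a b), sumJsq hJ]; ring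

end NormHelpers

/-- The norm of the circle-bundle curvature operator:
`‖R‖² = ‖K‖² - (3/2) m τ² λ̄ + ((6m²+5m)/16) τ⁴`. -/
theorem stmt16 (m : ℕ) (hm : 1 ≤ m)
    (K : Fin (2*m) → Fin (2*m) → Fin (2*m) → Fin (2*m) → ℝ)
    (J : Fin (2*m) → Fin (2*m) → ℝ) (τ : ℝ) (hτ : 0 < τ)
    (hK : IsKael m K J) :
    norm4sq (Rb m K J τ)
      = norm4sq K - (3/2) * (m : ℝ) * τ ^ 2 * lamK m K
        + ((6 * (m : ℝ) ^ 2 + 5 * (m : ℝ)) / 16) * τ ^ 4 := by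
  obtain ⟨⟨ha, hb, hs, hbi⟩, hJa, hJ, hinv⟩ := hK
  unfold norm4sq inner4
  simp only [Fintype.sum_sum_type, Fintype.sum_unique]
  simp only [Rb, Finset.sum_const_zero, mul_zero, zero_mul, add_zero, zero_add,
    neg_mul_neg, neg_neg, mul_neg, neg_mul]
  simp only [Finset.sum_add_distrib]
  have hcard : ((Fintype.card (Fin (2*m)) : ℕ) : ℝ) = 2*(m:ℝ) := by
    rw [Fintype.card_fin]; push_cast; ring
  have hV : (∑ x : Fin (2*m), ∑ y : Fin (2*m), τ^2/4 * kd x y * (τ^2/4 * kd x y))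
      = (τ^2/4)^2 * (2*(m:ℝ)) := by
    calc (∑ x : Fin (2*m), ∑ y : Fin (2*m), τ^2/4 * kd x y * (τ^2/4 * kd x y))
        = ∑ x : Fin (2*m), ∑ y : Fin (2*m), (τ^2/4)^2 * (kd x y * kd x y) :=
          Finset.sum_congr rfl fun x _ => Finset.sum_congr rfl fun y _ => by ring
      _ = (τ^2/4)^2 * ∑ x : Fin (2*m), ∑ y : Fin (2*m), kd x y * kd x y := by
          simp only [← Finset.mul_sum]
      _ = (τ^2/4)^2 * (2*(m:ℝ)) := by rw [sum_kd_sq, hcard]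
  have Texp : ∀ i j k l : Fin (2*m),
      (K i j k l - τ^2/4 * (2 * J i j * J k l + J i k * J j l - J i l * J j k)) *
        (K i j k l - τ^2/4 * (2 * J i j * J k l + J i k * J j l - J i l * J j k))
      = K i j k l * K i j k l
        + (-(τ^2)) * (K i j k l * (J i j * J k l))
        + (-(τ^2/2)) * (K i j k l * (J i k * J j l))
        + (τ^2/2) * (K i j k l * (J i l * J j k))
        + (τ^4/4) * ((J i j * J i j) * (J k l * J k l))
        + (τ^4/16) * ((J i k * J i k) * (J j l * J j l))
        + (τ^4/16) * ((J i l * J i l) * (J j k * J j k))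
        + (τ^4/4) * ((J i j * J k l) * (J i k * J j l))
        + (-(τ^4/4)) * ((J i j * J k l) * (J i l * J j k))
        + (-(τ^4/8)) * ((J i k * J j l) * (J i l * J j k)) := by
    intros; ring
  have split : (∑ i : Fin (2*m), ∑ j, ∑ k, ∑ l,
        (K i j k l - τ^2/4 * (2 * J i j * J k l + J i k * J j l - J i l * J j k)) *
          (K i j k l - τ^2/4 * (2 * J i j * J k l + J i k * J j l - J i l * J j k)))
      = (∑ i : Fin (2*m), ∑ j, ∑ k, ∑ l, K i j k l * K i j k l)
        + (-(τ^2)) * (∑ i : Fin (2*m), ∑ j, ∑ k, ∑ l, K i j k l * (J i j * J k l))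
        + (-(τ^2/2)) * (∑ i : Fin (2*m), ∑ j, ∑ k, ∑ l, K i j k l * (J i k * J j l))
        + (τ^2/2) * (∑ i : Fin (2*m), ∑ j, ∑ k, ∑ l, K i j k l * (J i l * J j k))
        + (τ^4/4) * (∑ i : Fin (2*m), ∑ j, ∑ k, ∑ l, (J i j * J i j) * (J k l * J k l))
        + (τ^4/16) * (∑ i : Fin (2*m), ∑ j, ∑ k, ∑ l, (J i k * J i k) * (J j l * J j l))
        + (τ^4/16) * (∑ i : Fin (2*m), ∑ j, ∑ k, ∑ l, (J i l * J i l) * (J j k * J j k))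
        + (τ^4/4) * (∑ i : Fin (2*m), ∑ j, ∑ k, ∑ l, (J i j * J k l) * (J i k * J j l))
        + (-(τ^4/4)) * (∑ i : Fin (2*m), ∑ j, ∑ k, ∑ l, (J i j * J k l) * (J i l * J j k))
        + (-(τ^4/8)) * (∑ i : Fin (2*m), ∑ j, ∑ k, ∑ l, (J i k * J j l) * (J i l * J j k)) := by
    calc (∑ i : Fin (2*m), ∑ j, ∑ k, ∑ l,
        (K i j k l - τ^2/4 * (2 * J i j * J k l + J i k * J j l - J i l * J j k)) *
          (K i j k l - τ^2/4 * (2 * J i j * J k l + J i k * J j l - J i l * J j k)))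
        = ∑ i : Fin (2*m), ∑ j, ∑ k, ∑ l,
            (K i j k l * K i j k l
            + (-(τ^2)) * (K i j k l * (J i j * J k l))
            + (-(τ^2/2)) * (K i j k l * (J i k * J j l))
            + (τ^2/2) * (K i j k l * (J i l * J j k))
            + (τ^4/4) * ((J i j * J i j) * (J k l * J k l))
            + (τ^4/16) * ((J i k * J i k) * (J j l * J j l))
            + (τ^4/16) * ((J i l * J i l) * (J j k * J j k))
            + (τ^4/4) * ((J i j * J k l) * (J i k * J j l))
            + (-(τ^4/4)) * ((J i j * J k l) * (J i l * J j k))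
            + (-(τ^4/8)) * ((J i k * J j l) * (J i l * J j k))) :=
          Finset.sum_congr rfl fun i _ => Finset.sum_congr rfl fun j _ =>
            Finset.sum_congr rfl fun k _ => Finset.sum_congr rfl fun l _ => Texp i j k l
      _ = _ := by simp only [Finset.mul_sum, ← Finset.sum_add_distrib]
  rw [A_eq ha hb hs hbi hJa hJ hinv, B_eq hs hJ hinv, C_eq hb hs hJ hinv,
    T4_eq hJ, T5_eq hJ, T6_eq hJ, T7_eq hJ, T8_eq hJa hJ, T9_eq hJ, hcard] at split
  rw [split, hV]
  have hm' : (2*(m:ℝ)) ≠ 0 := by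
    have : (m:ℝ) ≠ 0 := Nat.cast_ne_zero.mpr (by omega)
    positivity
  have hscal : scal K = 2*(m:ℝ) * lamK m K := by
    unfold lamK; field_simp
  rw [hscal]; ring

end Work

end PaperStmt
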